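/- (Monotonicity of the entropy under enlargement of the domain, discrete spins) If the spin set S is finite, 0 ∈ S, and the Hamiltonian family satisfies the null-state property (for Γ ⊂ Γ', configurations on Γ' that vanish on Γ'∖Γ have the same energy as their restriction to Γ), then for any two bounded domains Γ ⊂ Γ' and all E, M, ΔM one has S(E,M,ΔM;Γ) ≤ S(E,M,ΔM;Γ'). -/

import Mathlib

open MeasureTheory Set Bornology
open scoped Classical

noncomputable section

namespace Stmt4

variable {d : ℕ}

/-- The embedding of a lattice point of `ℤ^d` into `ℝ^d`. -/
def emb (r : Fin d → ℤ) : EuclideanSpace ℝ (Fin d) := WithLp.toLp 2 (fun i => (r i : ℝ))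

/-- The set of lattice points `Γ̂ = Γ ∩ ℤ^d` of a (bounded) domain `Γ ⊆ ℝ^d`. -/
def latticePoints (A : Set (EuclideanSpace ℝ (Fin d))) : Finset (Fin d → ℤ) :=
  if h : {r : Fin d → ℤ | emb r ∈ A}.Finite then h.toFinset else ∅

/-- A spin configuration on `Λ`: values in `S` on `Λ`, null value `0` outside. -/
def IsConfig (S : Finset ℝ) (Λ : Finset (Fin d → ℤ)) (c : (Fin d → ℤ) → ℝ) : Prop :=
  (∀ r ∈ Λ, c r ∈ S) ∧ ∀ r ∉ Λ, c r = 0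

/-- Restriction of a configuration to `Λ` (null state outside). -/
def restrict (Λ : Finset (Fin d → ℤ)) (c : (Fin d → ℤ) → ℝ) : (Fin d → ℤ) → ℝ :=
  fun r => if r ∈ Λ then c r else 0

/-- The microcanonical entropy `S(E, M, ΔM; Γ)`. -/
def entropy (S : Finset ℝ) (Λ : Finset (Fin d → ℤ)) (H : ((Fin d → ℤ) → ℝ) → ℝ)
    (E M ΔM : ℝ) : ℝ :=
  Real.log (Nat.card {c : (Fin d → ℤ) → ℝ //
    IsConfig S Λ c ∧ H c ≤ E ∧ (∑ r ∈ Λ, c r) ∈ Set.Ico M (M + ΔM)})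

lemma lattice_finite {A : Set (EuclideanSpace ℝ (Fin d))} (hA : IsBounded A) :
    {r : Fin d → ℤ | emb r ∈ A}.Finite := by
  obtain ⟨R, hR⟩ := hA.subset_closedBall 0
  have hsub : {r : Fin d → ℤ | emb r ∈ A} ⊆
      Set.pi Set.univ (fun _ : Fin d => Set.Icc (⌈-R⌉) (⌊R⌋)) := by
    intro r hr i _
    have hnorm : ‖emb r‖ ≤ R := by
      have := hR hr
      simpa [Metric.mem_closedBall, dist_eq_norm] using this
    have habs : |(r i : ℝ)| ≤ ‖emb r‖ := by
      have := EuclideanSpace.norm_eq (emb r)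
      have h1 : |(r i : ℝ)| = Real.sqrt (|(r i:ℝ)|^2) := by
        rw [Real.sqrt_sq_eq_abs, abs_abs]
      rw [h1, this]
      apply Real.sqrt_le_sqrt
      refine Eq.trans_le ?_ (Finset.single_le_sum (f := fun j => ‖emb r j‖^2)
        (fun j _ => sq_nonneg _) (Finset.mem_univ i))
      simp [emb]
    have h2 : |(r i : ℝ)| ≤ R := habs.trans hnorm
    rw [abs_le] at h2
    constructor
    · exact Int.ceil_le.mpr (by exact_mod_cast h2.1)
    · exact Int.le_floor.mpr (by exact_mod_cast h2.2)
  exact (Set.Finite.pi (fun _ => Set.finite_Icc _ _)).subset hsub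

/-- **Monotonicity of the entropy under enlargement of the domain (discrete spins)**:
if `0 ∈ S` and the Hamiltonian family has the null-state property, then for bounded
domains `Γ ⊆ Γ'` the entropy satisfies `S(E,M,ΔM;Γ) ≤ S(E,M,ΔM;Γ')`. -/
theorem entropy_monotone
    (hd : 0 < d)
    (S : Finset ℝ) (h0S : (0:ℝ) ∈ S)
    (H : Finset (Fin d → ℤ) → ((Fin d → ℤ) → ℝ) → ℝ)
    -- the null-state property: a configuration on `Γ'` vanishing on `Γ'∖Γ` has the same
    -- energy as its restriction to `Γ`
    (hnull : ∀ Λ Λ' : Finset (Fin d → ℤ), Λ ⊆ Λ' → ∀ c : (Fin d → ℤ) → ℝ,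
      (∀ r ∈ Λ' \ Λ, c r = 0) → H Λ' c = H Λ (restrict Λ c))
    (Γ Γ' : Set (EuclideanSpace ℝ (Fin d))) (hΓ'b : IsBounded Γ') (hΓΓ' : Γ ⊆ Γ')
    (E M ΔM : ℝ) :
    entropy S (latticePoints Γ) (H (latticePoints Γ)) E M ΔM ≤
      entropy S (latticePoints Γ') (H (latticePoints Γ')) E M ΔM := by
  have hfin' : {r : Fin d → ℤ | emb r ∈ Γ'}.Finite := lattice_finite hΓ'b
  have hfin : {r : Fin d → ℤ | emb r ∈ Γ}.Finite :=
    hfin'.subset (fun r hr => hΓΓ' hr)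
  set Λ := latticePoints Γ with hΛ
  set Λ' := latticePoints Γ' with hΛ'
  have hΛdef : Λ = hfin.toFinset := by simp [hΛ, latticePoints, hfin]
  have hΛ'def : Λ' = hfin'.toFinset := by simp [hΛ', latticePoints, hfin']
  have hsub : Λ ⊆ Λ' := by
    rw [hΛdef, hΛ'def]
    intro r hr
    simp only [Set.Finite.mem_toFinset] at *
    exact hΓΓ' hr
  -- the two subtypes
  set P := fun c : (Fin d → ℤ) → ℝ =>
    IsConfig S Λ c ∧ H Λ c ≤ E ∧ (∑ r ∈ Λ, c r) ∈ Set.Ico M (M + ΔM)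
  set Q := fun c : (Fin d → ℤ) → ℝ =>
    IsConfig S Λ' c ∧ H Λ' c ≤ E ∧ (∑ r ∈ Λ', c r) ∈ Set.Ico M (M + ΔM)
  have hPQ : ∀ c, P c → Q c := by
    intro c ⟨⟨hcS, hc0⟩, hE, hM⟩
    have hvanish : ∀ r ∈ Λ' \ Λ, c r = 0 := by
      intro r hr
      exact hc0 r (Finset.mem_sdiff.mp hr).2
    have hrest : restrict Λ c = c := by
      funext r
      by_cases h : r ∈ Λ <;> simp [restrict, h]
      exact (hc0 r h).symm
    have hsum : ∑ r ∈ Λ', c r = ∑ r ∈ Λ, c r :=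
      (Finset.sum_subset hsub (fun r _ hr => hc0 r hr)).symm
    refine ⟨⟨?_, ?_⟩, ?_, ?_⟩
    · intro r hr
      by_cases h : r ∈ Λ
      · exact hcS r h
      · rw [hc0 r h]; exact h0S
    · intro r hr; exact hc0 r (fun h => hr (hsub h))
    · rw [hnull Λ Λ' hsub c hvanish, hrest]; exact hE
    · rw [hsum]; exact hM
  -- finiteness of the Q-subtype
  have hQfin : Finite {c : (Fin d → ℤ) → ℝ // Q c} := by
    have : Function.Injective
        (fun c : {c : (Fin d → ℤ) → ℝ // Q c} => fun r : Λ' => c.1 r) := by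
      intro c1 c2 h
      apply Subtype.ext
      funext r
      by_cases hr : r ∈ Λ'
      · exact congrFun h ⟨r, hr⟩
      · rw [c1.2.1.2 r hr, c2.2.1.2 r hr]
    have hran : ∀ c : {c : (Fin d → ℤ) → ℝ // Q c}, ∀ r : Λ', c.1 r ∈ S :=
      fun c r => c.2.1.1 r r.2
    let f : {c : (Fin d → ℤ) → ℝ // Q c} → (Λ' → S) :=
      fun c r => ⟨c.1 r, hran c r⟩
    have hfinj : Function.Injective f := by
      intro c1 c2 h
      apply this
      funext r
      exact congrArg Subtype.val (congrFun h r)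
    exact Finite.of_injective f hfinj
  have hcard : Nat.card {c : (Fin d → ℤ) → ℝ // P c} ≤
      Nat.card {c : (Fin d → ℤ) → ℝ // Q c} := by
    haveI := hQfin
    exact Nat.card_le_card_of_injective
      (fun c => ⟨c.1, hPQ c.1 c.2⟩)
      (fun c1 c2 h => Subtype.ext (by simpa using congrArg Subtype.val h))
  unfold entropy
  rcases Nat.eq_zero_or_pos (Nat.card {c : (Fin d → ℤ) → ℝ // P c}) with h0 | hpos
  · rw [h0]
    simpa using Real.log_natCast_nonneg _
  · apply Real.log_le_log (by exact_mod_cast hpos)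
    exact_mod_cast hcard

end Stmt4
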